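/- arXiv:2212.13724 — 2 statements merged into one kernel-verified Lean document; each statement's English description precedes it below -/
import Mathlib

section
/- For an n-vertex connected graph G, the average connectivity satisfies κ̄(G) ≤ 2α'(G), where κ̄(G) = (1/C(n,2)) Σ over unordered pairs {u,v} of κ(u,v) and α'(G) is the matching number. -/
open Finset

namespace AvgConn

variable {V : Type*} [Fintype V] [DecidableEq V]

/-- There exist `k` pairwise internally disjoint paths from `u` to `v` in `G`. -/
def InternallyDisjointPaths (G : SimpleGraph V) (u v : V) (k : ℕ) : Prop :=
  ∃ p : Fin k → G.Walk u v, Function.Injective p ∧ (∀ i, (p i).IsPath) ∧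
    ∀ i j, i ≠ j → ∀ w, w ∈ (p i).support → w ∈ (p j).support → w = u ∨ w = v

/-- Local connectivity `κ(u,v)`: the maximum number of internally disjoint `u,v`-paths,
with the convention `κ(v,v) = 0`. -/
noncomputable def localConn (G : SimpleGraph V) (u v : V) : ℕ :=
  if u = v then 0 else sSup {k | InternallyDisjointPaths G u v k}

/-- Vertex connectivity `κ(G)`: minimum number of vertices whose deletion leaves a
disconnected or trivial graph. -/
noncomputable def vertexConnectivity (G : SimpleGraph V) : ℕ :=
  sInf {k | ∃ S : Finset V, S.card = k ∧
    (¬ (G.induce ((Sᶜ : Finset V) : Set V)).Connected ∨ (Sᶜ : Finset V).card ≤ 1)}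

/-- The average connectivity matrix: `(u,v)`-entry `κ(u,v) / C(n,2)`. -/
noncomputable def avgConnMatrix (G : SimpleGraph V) : Matrix V V ℝ :=
  Matrix.of fun u v => (localConn G u v : ℝ) / ((Fintype.card V).choose 2 : ℝ)

/-- Transmission of a vertex: `T(v) = (1/C(n,2)) Σ_w κ(v,w)`. -/
noncomputable def transmission (G : SimpleGraph V) (v : V) : ℝ :=
  (∑ w, (localConn G v w : ℝ)) / ((Fintype.card V).choose 2 : ℝ)

/-- Average connectivity `κ̄(G)`: average of `κ(u,v)` over unordered pairs, equivalently the
sum over ordered pairs divided by `n(n-1)`. -/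
noncomputable def avgConn (G : SimpleGraph V) : ℝ :=
  (∑ u, ∑ v, (localConn G u v : ℝ)) / ((Fintype.card V : ℝ) * ((Fintype.card V : ℝ) - 1))

/-- Matching number `α'(G)`: maximum number of edges in a matching. -/
noncomputable def matchingNumber (G : SimpleGraph V) : ℕ :=
  sSup {k | ∃ M : G.Subgraph, M.IsMatching ∧ M.edgeSet.ncard = k}

/-- Spectral radius of a real square matrix: supremum of absolute values of its
(real) eigenvalues. -/
noncomputable def specRad {n : Type*} [Fintype n] [DecidableEq n] (A : Matrix n n ℝ) : ℝ :=
  sSup {r : ℝ | ∃ μ : ℝ, Module.End.HasEigenvalue (Matrix.toLin' A) μ ∧ r = |μ|}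

/-- The join `G ∨ H` of two graphs: all edges of `G`, of `H`, and all edges between. -/
def graphJoin {α β : Type*} (G : SimpleGraph α) (H : SimpleGraph β) : SimpleGraph (α ⊕ β) where
  Adj x y :=
    match x, y with
    | Sum.inl a, Sum.inl a' => G.Adj a a'
    | Sum.inr b, Sum.inr b' => H.Adj b b'
    | _, _ => True
  symm := ⟨by rintro (a | b) (a' | b') h <;> simp_all <;> exact h.symm⟩
  loopless := ⟨by rintro (a | b) h <;> simp_all⟩


section AuxLemmas

-- getVert 1 facts
lemma gv1_ne {G : SimpleGraph V} {v u : V} (q : G.Walk v u) (hq : q.IsPath) (hvu : v ≠ u) :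
    q.getVert 1 ≠ v := by
  cases q with
  | nil => exact absurd rfl hvu
  | cons h t =>
    rw [SimpleGraph.Walk.getVert_cons_succ]
    rw [SimpleGraph.Walk.cons_isPath_iff h t] at hq
    intro hx
    rw [SimpleGraph.Walk.getVert_zero] at hx
    exact hq.2 (hx ▸ t.start_mem_support)

lemma gv1_eq_end {G : SimpleGraph V} {v u : V} (q q' : G.Walk v u) (hq : q.IsPath)
    (hq' : q'.IsPath) (h1 : q.getVert 1 = u) (h1' : q'.getVert 1 = u) (hvu : v ≠ u) :
    q = q' := by
  cases q with
  | nil => exact absurd rfl hvu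
  | cons h t =>
    cases q' with
    | nil => exact absurd rfl hvu
    | cons h' t' =>
      rw [SimpleGraph.Walk.getVert_cons_succ, SimpleGraph.Walk.getVert_zero] at h1
      rw [SimpleGraph.Walk.getVert_cons_succ, SimpleGraph.Walk.getVert_zero] at h1'
      subst h1
      have ht : t = SimpleGraph.Walk.nil :=
        SimpleGraph.Walk.isPath_iff_eq_nil.1 ((SimpleGraph.Walk.cons_isPath_iff h t).1 hq).1
      subst h1'
      have ht' : t' = SimpleGraph.Walk.nil :=
        SimpleGraph.Walk.isPath_iff_eq_nil.1 ((SimpleGraph.Walk.cons_isPath_iff h' t').1 hq').1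
      subst ht; subst ht'; rfl

lemma idp_le_degree {G : SimpleGraph V} [DecidableRel G.Adj] {u v : V} (huv : u ≠ v) {k : ℕ}
    (h : InternallyDisjointPaths G u v k) : k ≤ G.degree v := by
  obtain ⟨p, hinj, hpath, hdisj⟩ := h
  set q : Fin k → G.Walk v u := fun i => (p i).reverse with hqdef
  have hqpath : ∀ i, (q i).IsPath := fun i => (hpath i).reverse
  have hnotnil : ∀ i, ¬ (q i).Nil := fun i => SimpleGraph.Walk.not_nil_of_ne (Ne.symm huv)
  set f : Fin k → V := fun i => (q i).getVert 1 with hfdef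
  have hadj : ∀ i, G.Adj v (f i) := fun i => by
    simpa using SimpleGraph.Walk.adj_snd (hnotnil i)
  have hmem : ∀ i, f i ∈ (p i).support := fun i => by
    have : f i ∈ (q i).support :=
      SimpleGraph.Walk.mem_support_iff_exists_getVert.2
        ⟨1, rfl, SimpleGraph.Walk.not_nil_iff_lt_length.1 (hnotnil i)⟩
    simpa [hqdef, SimpleGraph.Walk.support_reverse] using this
  have hfinj : Function.Injective f := by
    intro i j hij
    by_contra hne
    rcases hdisj i j hne (f i) (hmem i) (hij ▸ hmem j) with h1 | h2
    · -- f i = u : both q i, q j are single edges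
      have hqq : q i = q j := by
        refine gv1_eq_end _ _ (hqpath i) (hqpath j) h1 ?_ (Ne.symm huv)
        exact hij.symm.trans h1
      have : p i = p j := by
        have := congrArg SimpleGraph.Walk.reverse hqq
        simpa [hqdef] using this
      exact hne (hinj this)
    · exact (gv1_ne (q i) (hqpath i) (Ne.symm huv)) h2
  have : ∀ i, f i ∈ G.neighborFinset v := fun i => by
    rw [SimpleGraph.mem_neighborFinset]; exact hadj i
  calc k = (Finset.univ : Finset (Fin k)).card := by simp
    _ ≤ (G.neighborFinset v).card := Finset.card_le_card_of_injOn f (fun i _ => this i)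
        (Function.Injective.injOn hfinj)
    _ = G.degree v := rfl


lemma idp_symm {G : SimpleGraph V} {u v : V} {k : ℕ}
    (h : InternallyDisjointPaths G u v k) : InternallyDisjointPaths G v u k := by
  obtain ⟨p, hinj, hpath, hdisj⟩ := h
  refine ⟨fun i => (p i).reverse, ?_, fun i => (hpath i).reverse, ?_⟩
  · intro i j hij
    apply hinj
    have := congrArg SimpleGraph.Walk.reverse hij
    simpa using this
  · intro i j hij w hwi hwj
    rw [SimpleGraph.Walk.support_reverse, List.mem_reverse] at hwi hwj
    rcases hdisj i j hij w hwi hwj with h | h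
    · exact Or.inr h
    · exact Or.inl h

lemma localConn_le_min {G : SimpleGraph V} [DecidableRel G.Adj] (u v : V) :
    localConn G u v ≤ if u = v then 0 else min (G.degree u) (G.degree v) := by
  unfold localConn
  by_cases huv : u = v
  · simp [huv]
  · simp only [huv, if_false]
    have hne : {k | InternallyDisjointPaths G u v k}.Nonempty :=
      ⟨0, ⟨fun i => i.elim0, fun i => i.elim0, fun i => i.elim0, fun i => i.elim0⟩⟩
    refine csSup_le hne fun k hk => le_min ?_ ?_
    · exact idp_le_degree (Ne.symm huv) (idp_symm hk)
    · exact idp_le_degree huv hk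


lemma matching_exists (G : SimpleGraph V) :
    ∃ M : G.Subgraph, M.IsMatching ∧ M.edgeSet.ncard = matchingNumber G ∧
      ∀ M' : G.Subgraph, M'.IsMatching → M'.edgeSet.ncard ≤ matchingNumber G := by
  have hbdd : BddAbove {k | ∃ M : G.Subgraph, M.IsMatching ∧ M.edgeSet.ncard = k} := by
    refine ⟨Fintype.card (Sym2 V), fun k hk => ?_⟩
    obtain ⟨M, _, rfl⟩ := hk
    calc M.edgeSet.ncard ≤ (Set.univ : Set (Sym2 V)).ncard :=
          Set.ncard_le_ncard (Set.subset_univ _) Set.finite_univ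
      _ = Fintype.card (Sym2 V) := by rw [Set.ncard_univ, Nat.card_eq_fintype_card]
  have hne : {k | ∃ M : G.Subgraph, M.IsMatching ∧ M.edgeSet.ncard = k}.Nonempty := by
    refine ⟨0, ⊥, fun v hv => absurd hv ?_, by simp [SimpleGraph.Subgraph.edgeSet_bot]⟩
    simp [SimpleGraph.Subgraph.verts_bot]
  obtain ⟨M, hM, hcard⟩ := Nat.sSup_mem hne hbdd
  exact ⟨M, hM, hcard, fun M' hM' => le_csSup hbdd ⟨M', hM', rfl⟩⟩


section PartnerAug
variable {G : SimpleGraph V} {M : G.Subgraph}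

lemma no_aug1 (hM : M.IsMatching)
    (hmax : ∀ M' : G.Subgraph, M'.IsMatching → M'.edgeSet.ncard ≤ M.edgeSet.ncard)
    {u u' : V} (hu : u ∉ M.verts) (hu' : u' ∉ M.verts) (h : G.Adj u u') : False := by
  have hM' : (M ⊔ G.subgraphOfAdj h).IsMatching := by
    refine hM.sup (SimpleGraph.Subgraph.IsMatching.subgraphOfAdj h) ?_
    rw [hM.support_eq_verts, (SimpleGraph.Subgraph.IsMatching.subgraphOfAdj h).support_eq_verts]
    rw [SimpleGraph.subgraphOfAdj_verts, Set.disjoint_right]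
    rintro x (rfl | rfl) <;> assumption
  have hnew : s(u, u') ∉ M.edgeSet := fun hmem => hu (M.edge_vert hmem)
  have := hmax _ hM'
  rw [SimpleGraph.Subgraph.edgeSet_sup, SimpleGraph.edgeSet_subgraphOfAdj,
    Set.union_singleton, Set.ncard_insert_of_notMem hnew] at this
  omega


open scoped Classical in
noncomputable def partner (M : G.Subgraph) (hM : M.IsMatching) (x : V) : V :=
  if h : x ∈ M.verts then (hM h).choose else x

lemma partner_adj (hM : M.IsMatching) {x : V} (hx : x ∈ M.verts) :
    M.Adj x (partner M hM x) := by
  rw [partner, dif_pos hx]; exact (hM hx).choose_spec.1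

lemma partner_eq (hM : M.IsMatching) {x y : V} (hx : x ∈ M.verts) (h : M.Adj x y) :
    y = partner M hM x := by
  rw [partner, dif_pos hx]; exact (hM hx).choose_spec.2 y h

lemma partner_mem (hM : M.IsMatching) {x : V} (hx : x ∈ M.verts) :
    partner M hM x ∈ M.verts := M.edge_vert (partner_adj hM hx).symm

lemma partner_partner (hM : M.IsMatching) {x : V} (hx : x ∈ M.verts) :
    partner M hM (partner M hM x) = x :=
  (partner_eq hM (partner_mem hM hx) (partner_adj hM hx).symm).symm

lemma partner_ne (hM : M.IsMatching) {x : V} (hx : x ∈ M.verts) :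
    partner M hM x ≠ x := (partner_adj hM hx).ne.symm

lemma del_matching (hM : M.IsMatching) {x : V} (hx : x ∈ M.verts) :
    (M.deleteVerts {x, partner M hM x}).IsMatching := by
  intro z hz
  rw [SimpleGraph.Subgraph.deleteVerts_verts, Set.mem_diff] at hz
  obtain ⟨hzv, hzs⟩ := hz
  simp only [Set.mem_insert_iff, Set.mem_singleton_iff, not_or] at hzs
  have hpz : partner M hM z ∉ ({x, partner M hM x} : Set V) := by
    simp only [Set.mem_insert_iff, Set.mem_singleton_iff, not_or]
    constructor
    · intro hzx
      have := congrArg (partner M hM) hzx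
      rw [partner_partner hM hzv] at this
      exact hzs.2 this
    · intro hzy
      have := congrArg (partner M hM) hzy
      rw [partner_partner hM hzv, partner_partner hM hx] at this
      exact hzs.1 this
  refine ⟨partner M hM z, ?_, ?_⟩
  · show (M.deleteVerts {x, partner M hM x}).Adj z (partner M hM z)
    rw [SimpleGraph.Subgraph.deleteVerts_adj]
    refine ⟨hzv, ?_, partner_mem hM hzv, hpz, partner_adj hM hzv⟩
    simp only [Set.mem_insert_iff, Set.mem_singleton_iff, not_or]; exact hzs
  · intro w hw
    rw [SimpleGraph.Subgraph.deleteVerts_adj] at hw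
    exact partner_eq hM hzv hw.2.2.2.2

lemma del_edgeSet (hM : M.IsMatching) {x : V} (hx : x ∈ M.verts) :
    (M.deleteVerts {x, partner M hM x}).edgeSet
      = M.edgeSet \ {s(x, partner M hM x)} := by
  ext e
  induction e using Sym2.ind with
  | _ p q =>
    simp only [SimpleGraph.Subgraph.mem_edgeSet, SimpleGraph.Subgraph.deleteVerts_adj,
      Set.mem_diff, Set.mem_singleton_iff, Set.mem_insert_iff, not_or]
    constructor
    · rintro ⟨hp, ⟨hpx, hpy⟩, hq, ⟨hqx, hqy⟩, hadj⟩
      refine ⟨hadj, ?_⟩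
      rw [Sym2.eq_iff]
      rintro (⟨rfl, rfl⟩ | ⟨rfl, rfl⟩)
      · exact hpx rfl
      · exact hqx rfl
    · rintro ⟨hadj, hne⟩
      rw [Sym2.eq_iff] at hne
      push_neg at hne
      have hp := M.edge_vert hadj
      have hq := M.edge_vert hadj.symm
      have hpx : p ≠ x := by
        rintro rfl
        exact hne.1 rfl (partner_eq hM hp hadj)
      have hqx : q ≠ x := by
        rintro rfl
        exact hne.2 (partner_eq hM hq hadj.symm) rfl
      have hpy : p ≠ partner M hM x := by
        intro hpe
        apply hqx
        have : q = partner M hM (partner M hM x) := hpe ▸ partner_eq hM hp hadj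
        rwa [partner_partner hM hx] at this
      have hqy : q ≠ partner M hM x := by
        intro hqe
        apply hpx
        have : p = partner M hM (partner M hM x) := hqe ▸ partner_eq hM hq hadj.symm
        rwa [partner_partner hM hx] at this
      exact ⟨hp, ⟨hpx, hpy⟩, hq, ⟨hqx, hqy⟩, hadj⟩


lemma no_aug3 (hM : M.IsMatching)
    (hmax : ∀ M' : G.Subgraph, M'.IsMatching → M'.edgeSet.ncard ≤ M.edgeSet.ncard)
    {x y u u' : V} (hx : x ∈ M.verts) (hadjM : M.Adj x y)
    (hu : u ∉ M.verts) (hu' : u' ∉ M.verts) (huu : u ≠ u')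
    (h1 : G.Adj u x) (h2 : G.Adj u' y) : False := by
  have hpy : partner M hM x = y := (partner_eq hM hx hadjM).symm
  have hyv : y ∈ M.verts := M.edge_vert hadjM.symm
  have hxy : x ≠ y := hadjM.ne
  have hux : u ≠ x := fun h => hu (h ▸ hx)
  have huy : u ≠ y := fun h => hu (h ▸ hyv)
  have hu'x : u' ≠ x := fun h => hu' (h ▸ hx)
  have hu'y : u' ≠ y := fun h => hu' (h ▸ hyv)
  have hdelM : (M.deleteVerts {x, y}).IsMatching := by
    have := del_matching hM hx; rwa [hpy] at this
  have hdelE : (M.deleteVerts {x, y}).edgeSet = M.edgeSet \ {s(x, y)} := by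
    have := del_edgeSet hM hx; rwa [hpy] at this
  have hd1 : (M.deleteVerts {x, y} ⊔ G.subgraphOfAdj h1).IsMatching := by
    refine hdelM.sup (SimpleGraph.Subgraph.IsMatching.subgraphOfAdj h1) ?_
    rw [hdelM.support_eq_verts,
      (SimpleGraph.Subgraph.IsMatching.subgraphOfAdj h1).support_eq_verts,
      SimpleGraph.subgraphOfAdj_verts, SimpleGraph.Subgraph.deleteVerts_verts,
      Set.disjoint_right]
    rintro z (rfl | rfl)
    · exact fun hz => hu hz.1
    · exact fun hz => hz.2 (by simp)
  have hd2 : ((M.deleteVerts {x, y} ⊔ G.subgraphOfAdj h1) ⊔ G.subgraphOfAdj h2).IsMatching := by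
    refine hd1.sup (SimpleGraph.Subgraph.IsMatching.subgraphOfAdj h2) ?_
    rw [hd1.support_eq_verts, (SimpleGraph.Subgraph.IsMatching.subgraphOfAdj h2).support_eq_verts,
      SimpleGraph.subgraphOfAdj_verts, SimpleGraph.Subgraph.verts_sup,
      SimpleGraph.subgraphOfAdj_verts, SimpleGraph.Subgraph.deleteVerts_verts,
      Set.disjoint_right]
    rintro z (rfl | rfl)
    · rintro (hz | hz)
      · exact hu' hz.1
      · rcases hz with rfl | rfl
        · exact huu rfl
        · exact hu'x rfl
    · rintro (hz | hz)
      · exact hz.2 (by simp)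
      · rcases hz with rfl | rfl
        · exact huy rfl
        · exact hxy rfl
  have hexy : s(x, y) ∈ M.edgeSet := hadjM
  have hcard : 1 ≤ M.edgeSet.ncard := (Set.ncard_pos (Set.toFinite _)).2 ⟨_, hexy⟩
  have hE : ((M.deleteVerts {x, y} ⊔ G.subgraphOfAdj h1) ⊔ G.subgraphOfAdj h2).edgeSet
      = insert (s(u', y)) (insert (s(u, x)) (M.edgeSet \ {s(x, y)})) := by
    rw [SimpleGraph.Subgraph.edgeSet_sup, SimpleGraph.Subgraph.edgeSet_sup,
      SimpleGraph.edgeSet_subgraphOfAdj, SimpleGraph.edgeSet_subgraphOfAdj, hdelE,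
      Set.union_singleton, Set.union_singleton]
  have hnm1 : s(u, x) ∉ M.edgeSet \ {s(x, y)} := by
    rintro ⟨hmem, -⟩; exact hu (M.edge_vert hmem)
  have hnm2 : s(u', y) ∉ insert (s(u, x)) (M.edgeSet \ {s(x, y)}) := by
    rintro (heq | ⟨hmem, -⟩)
    · rw [Sym2.eq_iff] at heq
      rcases heq with ⟨rfl, rfl⟩ | ⟨rfl, rfl⟩
      · exact huu rfl
      · exact hu'x rfl
    · exact hu' (M.edge_vert hmem)
  have := hmax _ hd2
  rw [hE, Set.ncard_insert_of_notMem hnm2, Set.ncard_insert_of_notMem hnm1,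
    Set.ncard_diff_singleton_of_mem hexy] at this
  omega

end PartnerAug

lemma key_count (G : SimpleGraph V) [DecidableRel G.Adj] {M : G.Subgraph}
    (hM : M.IsMatching)
    (hmax : ∀ M' : G.Subgraph, M'.IsMatching → M'.edgeSet.ncard ≤ M.edgeSet.ncard) :
    ∑ u, ∑ v, (if u = v then 0 else min (G.degree u) (G.degree v))
      ≤ 2 * M.edgeSet.ncard * (Fintype.card V * (Fintype.card V - 1)) := by
  classical
  set n := Fintype.card V with hn
  set μ : V → V → ℕ := fun u v => if u = v then 0 else min (G.degree u) (G.degree v) with hμ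
  set Wf : Finset V := M.verts.toFinset with hWf
  set Uf : Finset V := Wfᶜ with hUf
  set w : ℕ := Wf.card with hw
  set b : ℕ := Uf.card with hb
  have hmemW : ∀ z, z ∈ Wf ↔ z ∈ M.verts := fun z => Set.mem_toFinset
  have hmemU : ∀ z, z ∈ Uf ↔ z ∉ M.verts := fun z => by
    rw [hUf, Finset.mem_compl, hmemW]
  have hwb : w + b = n := Finset.card_add_card_compl Wf
  -- independence of U
  have hInd : ∀ u, u ∉ M.verts → ∀ z, G.Adj u z → z ∈ M.verts := by
    intro u hu z hz
    by_contra hzv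
    exact no_aug1 hM hmax hu hzv hz
  -- degree bound
  have hdegmax : ∀ v, G.degree v ≤ n - 1 := by
    intro v
    have hsub : G.neighborFinset v ⊆ Finset.univ.erase v := by
      intro z hz
      rw [Finset.mem_erase]
      exact ⟨(G.ne_of_adj (by rwa [SimpleGraph.mem_neighborFinset] at hz)).symm,
        Finset.mem_univ z⟩
    calc G.degree v ≤ (Finset.univ.erase v).card := Finset.card_le_card hsub
      _ = n - 1 := by rw [Finset.card_erase_of_mem (Finset.mem_univ v), Finset.card_univ]
  -- g and D
  set g : V → ℕ := fun x => (Uf.filter (fun u => G.Adj x u)).card with hg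
  set D : ℕ := ∑ u ∈ Uf, G.degree u with hD
  have hDeq : D = ∑ x ∈ Wf, g x := by
    have h1 : ∀ u ∈ Uf, G.degree u = ∑ x ∈ Wf, (if G.Adj u x then 1 else 0) := by
      intro u hu
      rw [← Finset.card_filter]
      have : G.neighborFinset u = Wf.filter (fun x => G.Adj u x) := by
        ext z
        rw [SimpleGraph.mem_neighborFinset, Finset.mem_filter, hmemW]
        exact ⟨fun h => ⟨hInd u ((hmemU u).1 hu) z h, h⟩, fun h => h.2⟩
      rw [← this]; rfl
    rw [hD, Finset.sum_congr rfl h1, Finset.sum_comm]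
    refine Finset.sum_congr rfl fun x _ => ?_
    simp only [hg, Finset.card_filter]
    refine Finset.sum_congr rfl fun u _ => ?_
    have : G.Adj u x ↔ G.Adj x u := G.adj_comm u x
    by_cases hadj : G.Adj u x
    · rw [if_pos hadj, if_pos (this.1 hadj)]
    · rw [if_neg hadj, if_neg (fun hc => hadj (this.2 hc))]
  -- per-edge bound
  have hBplus : ∀ x ∈ Wf, g x + g (partner M hM x) ≤ b + 1 := by
    intro x hxW
    have hxv : x ∈ M.verts := (hmemW x).1 hxW
    have hadjM : M.Adj x (partner M hM x) := partner_adj hM hxv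
    rcases Finset.eq_empty_or_nonempty (Uf.filter (fun u => G.Adj x u)) with he | ⟨u, hu⟩
    · have : g x = 0 := by rw [hg]; simp only [he, Finset.card_empty]
      have h2 : g (partner M hM x) ≤ b := Finset.card_filter_le _ _
      omega
    · rw [Finset.mem_filter] at hu
      rcases Finset.eq_empty_or_nonempty (Uf.filter (fun u => G.Adj (partner M hM x) u))
        with he | ⟨u', hu'⟩
      · have : g (partner M hM x) = 0 := by rw [hg]; simp only [he, Finset.card_empty]
        have h2 : g x ≤ b := Finset.card_filter_le _ _
        omega
      · rw [Finset.mem_filter] at hu'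
        have hUu : u ∉ M.verts := (hmemU u).1 hu.1
        have hUu' : u' ∉ M.verts := (hmemU u').1 hu'.1
        have huu : u = u' := by
          by_contra hne
          exact no_aug3 hM hmax hxv hadjM hUu hUu' hne hu.2.symm hu'.2.symm
        subst huu
        have hfx : Uf.filter (fun z => G.Adj x z) ⊆ {u} := by
          intro z hzm
          rw [Finset.mem_filter] at hzm
          rw [Finset.mem_singleton]
          by_contra hzu
          exact no_aug3 hM hmax hxv hadjM ((hmemU z).1 hzm.1) hUu' hzu hzm.2.symm hu'.2.symm
        have hfy : Uf.filter (fun z => G.Adj (partner M hM x) z) ⊆ {u} := by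
          intro z hzm
          rw [Finset.mem_filter] at hzm
          rw [Finset.mem_singleton]
          by_contra hzu
          exact no_aug3 hM hmax hxv hadjM hUu ((hmemU z).1 hzm.1) (fun h => hzu h.symm)
            hu.2.symm hzm.2.symm
        have hb1 : 1 ≤ b := by
          rw [hb]
          exact Finset.card_pos.2 ⟨u, hu.1⟩
        have c1 : g x ≤ 1 := by
          rw [hg]
          simpa using Finset.card_le_card hfx
        have c2 : g (partner M hM x) ≤ 1 := by
          rw [hg]
          simpa using Finset.card_le_card hfy
        omega
  -- sum over partner equals sum
  have hsump : ∑ x ∈ Wf, g (partner M hM x) = ∑ x ∈ Wf, g x := by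
    refine Finset.sum_nbij' (i := partner M hM) (j := partner M hM) ?_ ?_ ?_ ?_ ?_
    all_goals intro x hx
    · exact (hmemW _).2 (partner_mem hM ((hmemW x).1 hx))
    · exact (hmemW _).2 (partner_mem hM ((hmemW x).1 hx))
    · exact partner_partner hM ((hmemW x).1 hx)
    · exact partner_partner hM ((hmemW x).1 hx)
    · rfl
  have h2D : 2 * D ≤ w * (b + 1) := by
    have : 2 * D = ∑ x ∈ Wf, (g x + g (partner M hM x)) := by
      rw [Finset.sum_add_distrib, hsump, hDeq]; ring
    rw [this]
    calc ∑ x ∈ Wf, (g x + g (partner M hM x)) ≤ ∑ _x ∈ Wf, (b + 1) :=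
          Finset.sum_le_sum hBplus
      _ = w * (b + 1) := by rw [Finset.sum_const, smul_eq_mul]
  -- w ≤ 2 * matching size
  have hwa : w ≤ 2 * M.edgeSet.ncard := by
    set F : V → Sym2 V := fun x => s(x, partner M hM x) with hF
    have hcard2 : ∀ e ∈ Wf.image F, (Wf.filter (fun x => F x = e)).card ≤ 2 := by
      intro e he
      obtain ⟨x0, hx0, rfl⟩ := Finset.mem_image.1 he
      have hsub : Wf.filter (fun x => F x = F x0) ⊆ {x0, partner M hM x0} := by
        intro z hz
        rw [Finset.mem_filter] at hz
        have := hz.2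
        rw [hF, Sym2.eq_iff] at this
        rcases this with ⟨h1, -⟩ | ⟨h1, -⟩
        · simp [h1]
        · simp [h1]
      calc (Wf.filter (fun x => F x = F x0)).card ≤ ({x0, partner M hM x0} : Finset V).card :=
            Finset.card_le_card hsub
        _ ≤ 2 := Finset.card_insert_le _ _ |>.trans (by simp)
    have h1 : w ≤ 2 * (Wf.image F).card := Finset.card_le_mul_card_image Wf 2 hcard2
    have h2 : (Wf.image F) ⊆ M.edgeSet.toFinset := by
      intro e he
      obtain ⟨x0, hx0, rfl⟩ := Finset.mem_image.1 he
      rw [Set.mem_toFinset]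
      exact partner_adj hM ((hmemW x0).1 hx0)
    have h3 : (Wf.image F).card ≤ M.edgeSet.ncard := by
      rw [Set.ncard_eq_toFinset_card']
      exact Finset.card_le_card h2
    omega
  -- split sums
  have hsplitv : ∀ h : V → ℕ, ∑ v, h v = ∑ v ∈ Wf, h v + ∑ v ∈ Uf, h v :=
    fun h => (Finset.sum_add_sum_compl Wf h).symm
  have hT : ∑ u, ∑ v, μ u v
      = ((∑ u ∈ Wf, ∑ v ∈ Wf, μ u v) + ∑ u ∈ Wf, ∑ v ∈ Uf, μ u v)
        + ((∑ u ∈ Uf, ∑ v ∈ Wf, μ u v) + ∑ u ∈ Uf, ∑ v ∈ Uf, μ u v) := by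
    calc ∑ u, ∑ v, μ u v
        = ∑ u ∈ Wf, ∑ v, μ u v + ∑ u ∈ Uf, ∑ v, μ u v :=
          (Finset.sum_add_sum_compl Wf _).symm
      _ = _ := by
          rw [Finset.sum_congr rfl (fun u _ => hsplitv (μ u)),
            Finset.sum_congr (rfl : Uf = Uf) (fun u _ => hsplitv (μ u)),
            Finset.sum_add_distrib, Finset.sum_add_distrib]
  have hμle : ∀ u v, μ u v ≤ G.degree v := fun u v => by
    rw [hμ]; dsimp only; split
    · exact Nat.zero_le _
    · exact min_le_right _ _
  have hμle' : ∀ u v, μ u v ≤ G.degree u := fun u v => by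
    rw [hμ]; dsimp only; split
    · exact Nat.zero_le _
    · exact min_le_left _ _
  have hμdiag : ∀ u, μ u u = 0 := fun u => by rw [hμ]; simp
  have hμmax : ∀ u v, μ u v ≤ n - 1 := fun u v => (hμle u v).trans (hdegmax v)
  have hWW : ∑ u ∈ Wf, ∑ v ∈ Wf, μ u v ≤ w * ((w - 1) * (n - 1)) := by
    refine (Finset.sum_le_card_nsmul _ _ ((w - 1) * (n - 1)) ?_).trans_eq (by rw [smul_eq_mul])
    intro u hu
    rw [← Finset.sum_erase _ (hμdiag u)]
    refine (Finset.sum_le_card_nsmul _ _ (n - 1) (fun v _ => hμmax u v)).trans ?_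
    rw [smul_eq_mul, Finset.card_erase_of_mem hu]
  have hWU : ∑ u ∈ Wf, ∑ v ∈ Uf, μ u v ≤ w * D := by
    refine (Finset.sum_le_card_nsmul _ _ D ?_).trans_eq (by rw [smul_eq_mul])
    intro u _
    exact Finset.sum_le_sum fun v _ => hμle u v
  have hUW : ∑ u ∈ Uf, ∑ v ∈ Wf, μ u v ≤ w * D := by
    have h1 : ∀ u ∈ Uf, ∑ v ∈ Wf, μ u v ≤ w * G.degree u := fun u _ =>
      (Finset.sum_le_card_nsmul _ _ _ (fun v _ => hμle' u v)).trans_eq (by rw [smul_eq_mul])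
    calc ∑ u ∈ Uf, ∑ v ∈ Wf, μ u v ≤ ∑ u ∈ Uf, w * G.degree u := Finset.sum_le_sum h1
      _ = w * D := by rw [hD, Finset.mul_sum]
  have hUU : 2 * (∑ u ∈ Uf, ∑ v ∈ Uf, μ u v) + 2 * D ≤ 2 * b * D := by
    have hpt : ∀ u v : V, 2 * μ u v ≤ (if u = v then 0 else G.degree u + G.degree v) := by
      intro u v
      rw [hμ]; dsimp only; split
      · simp
      · calc 2 * min (G.degree u) (G.degree v)
            = min (G.degree u) (G.degree v) + min (G.degree u) (G.degree v) := two_mul _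
          _ ≤ G.degree u + G.degree v := add_le_add (min_le_left _ _) (min_le_right _ _)
    have h2 : 2 * (∑ u ∈ Uf, ∑ v ∈ Uf, μ u v)
        ≤ ∑ u ∈ Uf, ∑ v ∈ Uf, (if u = v then 0 else G.degree u + G.degree v) := by
      rw [Finset.mul_sum]
      refine Finset.sum_le_sum fun u _ => ?_
      rw [Finset.mul_sum]
      exact Finset.sum_le_sum fun v _ => hpt u v
    have hdiag : ∑ u ∈ Uf, ∑ v ∈ Uf, (if u = v then G.degree u + G.degree v else 0)
        = 2 * D := by
      have h3 : ∀ u ∈ Uf, ∑ v ∈ Uf, (if u = v then G.degree u + G.degree v else 0)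
          = 2 * G.degree u := by
        intro u hu
        rw [Finset.sum_ite_eq Uf u (fun v => G.degree u + G.degree v), if_pos hu, two_mul]
      rw [Finset.sum_congr rfl h3, hD, ← Finset.mul_sum]
    have hall : (∑ u ∈ Uf, ∑ v ∈ Uf, (if u = v then 0 else G.degree u + G.degree v))
        + (∑ u ∈ Uf, ∑ v ∈ Uf, (if u = v then G.degree u + G.degree v else 0))
        = 2 * b * D := by
      rw [← Finset.sum_add_distrib]
      have h4 : ∀ u ∈ Uf, ((∑ v ∈ Uf, (if u = v then 0 else G.degree u + G.degree v))
          + ∑ v ∈ Uf, (if u = v then G.degree u + G.degree v else 0))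
          = b * G.degree u + D := by
        intro u hu
        rw [← Finset.sum_add_distrib]
        have h5 : ∀ v ∈ Uf, ((if u = v then 0 else G.degree u + G.degree v)
            + (if u = v then G.degree u + G.degree v else 0)) = G.degree u + G.degree v := by
          intro v _
          split <;> simp
        rw [Finset.sum_congr rfl h5, Finset.sum_add_distrib, Finset.sum_const, smul_eq_mul, hD]
      calc ∑ u ∈ Uf, ((∑ v ∈ Uf, (if u = v then 0 else G.degree u + G.degree v))
            + ∑ v ∈ Uf, (if u = v then G.degree u + G.degree v else 0))
          = ∑ u ∈ Uf, (b * G.degree u + D) := Finset.sum_congr rfl h4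
        _ = 2 * b * D := by
            rw [Finset.sum_add_distrib, ← Finset.mul_sum, ← hD, Finset.sum_const, smul_eq_mul,
              hb]
            ring
    omega
  -- final assembly
  have hgoal : ∑ u, ∑ v, μ u v ≤ w * (n * (n - 1)) := by
    rcases Nat.eq_zero_or_pos w with hw0 | hwpos
    · have hWf0 : Wf = ∅ := Finset.card_eq_zero.1 hw0
      have hD0 : D = 0 := by rw [hDeq, hWf0, Finset.sum_empty]
      have hUU0 : ∑ u ∈ Uf, ∑ v ∈ Uf, μ u v = 0 := by
        have h6 := hUU
        rw [hD0, Nat.mul_zero, Nat.mul_zero] at h6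
        omega
      rw [hT, hWf0, hUU0]
      simp
    rcases Nat.eq_zero_or_pos b with hb0 | hbpos
    · have hUf0 : Uf = ∅ := Finset.card_eq_zero.1 hb0
      rw [hT, hUf0]
      simp only [Finset.sum_empty, Finset.sum_const_zero, add_zero]
      refine hWW.trans (Nat.mul_le_mul_left w ?_)
      exact Nat.mul_le_mul_right _ (by omega)
    · have h1n : 1 ≤ n := by omega
      have h1w : 1 ≤ w := hwpos
      have hTle : ∑ u, ∑ v, μ u v
          ≤ w * ((w - 1) * (n - 1)) + w * D + (w * D + ∑ u ∈ Uf, ∑ v ∈ Uf, μ u v) := by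
        rw [hT]
        exact add_le_add (add_le_add hWW hWU) (add_le_add hUW le_rfl)
      have hw1 : ((w - 1 : ℕ) : ℤ) = (w : ℤ) - 1 := by
        have := Nat.cast_sub h1w (R := ℤ); simpa using this
      have hn1 : ((n - 1 : ℕ) : ℤ) = (n : ℤ) - 1 := by
        have := Nat.cast_sub h1n (R := ℤ); simpa using this
      have hTz : ((∑ u, ∑ v, μ u v : ℕ) : ℤ)
          ≤ (w : ℤ) * (((w : ℤ) - 1) * ((n : ℤ) - 1)) + w * D
            + (w * D + ((∑ u ∈ Uf, ∑ v ∈ Uf, μ u v : ℕ) : ℤ)) := by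
        have := (Nat.cast_le (α := ℤ)).2 hTle
        push_cast at this
        rw [hw1, hn1] at this
        push_cast
        linarith
      have hUUz : 2 * ((∑ u ∈ Uf, ∑ v ∈ Uf, μ u v : ℕ) : ℤ) + 2 * (D : ℤ)
          ≤ 2 * (b : ℤ) * (D : ℤ) := by exact_mod_cast hUU
      have h2Dz : 2 * (D : ℤ) ≤ (w : ℤ) * ((b : ℤ) + 1) := by exact_mod_cast h2D
      have hwbz : (w : ℤ) + (b : ℤ) = (n : ℤ) := by exact_mod_cast hwb
      have hbz : 1 ≤ (b : ℤ) := by exact_mod_cast hbpos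
      have hwz : 1 ≤ (w : ℤ) := by exact_mod_cast h1w
      have hDz : 0 ≤ (D : ℤ) := Int.natCast_nonneg D
      have e1 : 2 * (D : ℤ) * (2 * w + b - 1) ≤ (w : ℤ) * ((b : ℤ) + 1) * (2 * w + b - 1) :=
        mul_le_mul_of_nonneg_right h2Dz (by linarith)
      have e2 : 0 ≤ (w : ℤ) * (((b : ℤ) + 1) * ((b : ℤ) - 1)) := by
        refine mul_nonneg (by linarith) (mul_nonneg (by linarith) (by linarith))
      rw [← hwbz] at hTz
      have hfin : ((∑ u, ∑ v, μ u v : ℕ) : ℤ)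
          ≤ (w : ℤ) * ((n : ℤ) * ((n : ℤ) - 1)) := by
        rw [← hwbz]
        linarith [hTz, hUUz, e1, e2]
      have : ((∑ u, ∑ v, μ u v : ℕ) : ℤ) ≤ ((w * (n * (n - 1)) : ℕ) : ℤ) := by
        rw [Nat.cast_mul, Nat.cast_mul, hn1]
        exact hfin
      exact_mod_cast this
  refine hgoal.trans ?_
  exact Nat.mul_le_mul_right _ hwa

end AuxLemmas

/-- For an `n`-vertex connected graph `G`, `κ̄(G) ≤ 2α'(G)`. -/
theorem stmt10 (G : SimpleGraph V) (hG : G.Connected) (hn : 2 ≤ Fintype.card V) :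
    avgConn G ≤ 2 * (matchingNumber G : ℝ) := by
  classical
  have hn1 : 1 ≤ Fintype.card V := le_trans (by norm_num) hn
  have hnR : (2 : ℝ) ≤ (Fintype.card V : ℝ) := by exact_mod_cast hn
  have hpos : (0 : ℝ) < (Fintype.card V : ℝ) * ((Fintype.card V : ℝ) - 1) := by nlinarith
  rw [avgConn, div_le_iff₀ hpos]
  obtain ⟨M, hM, hMcard, hmax⟩ := matching_exists G
  rw [← hMcard] at hmax
  have hkey := key_count G hM hmax
  rw [hMcard] at hkey
  have c1 : (∑ u, ∑ v, (localConn G u v : ℝ))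
      ≤ ((∑ u, ∑ v, (if u = v then 0 else min (G.degree u) (G.degree v)) : ℕ) : ℝ) := by
    push_cast
    refine Finset.sum_le_sum fun u _ => Finset.sum_le_sum fun v _ => ?_
    exact_mod_cast localConn_le_min (G := G) u v
  have c2 : ((∑ u, ∑ v, (if u = v then 0 else min (G.degree u) (G.degree v)) : ℕ) : ℝ)
      ≤ 2 * (matchingNumber G : ℝ)
        * ((Fintype.card V : ℝ) * ((Fintype.card V : ℝ) - 1)) := by
    have := (Nat.cast_le (α := ℝ)).2 hkey
    rw [Nat.cast_mul, Nat.cast_mul, Nat.cast_mul, Nat.cast_sub hn1] at this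
    push_cast at this ⊢
    linarith
  calc (∑ u, ∑ v, (localConn G u v : ℝ)) ≤ _ := c1
    _ ≤ _ := c2


end AvgConn
end

section
/- For the complete bipartite graph K_{k,n−k} with 1 ≤ k ≤ n−k, the spectral radius of the average connectivity matrix equals (1/(n(n−1)))(√(n² + 4nk³ − 4nk − 4k⁴ + 4k²) + 2nk − n − 2k²). -/
open Finset

namespace AvgConn

variable {V : Type*} [Fintype V] [DecidableEq V]

section Aux
set_option linter.unusedSectionVars false

open SimpleGraph

variable {α β : Type*} [Fintype α] [Fintype β] [DecidableEq α] [DecidableEq β]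

private lemma localConn_eq {G : SimpleGraph V} {u v : V} (hne : u ≠ v) (c : ℕ)
    (hmem : InternallyDisjointPaths G u v c)
    (hub : ∀ j, InternallyDisjointPaths G u v j → j ≤ c) :
    localConn G u v = c := by
  rw [localConn, if_neg hne]
  exact le_antisymm (csSup_le ⟨c, hmem⟩ fun j hj => hub j hj) (le_csSup ⟨c, hub⟩ hmem)

private lemma snd_inr {a : α} {x : α ⊕ β} (h : (completeBipartiteGraph α β).Adj (.inl a) x) :
    ∃ b, x = .inr b := by
  rcases x with y | b
  · simp at h
  · exact ⟨b, rfl⟩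

private lemma snd_inl {b : β} {x : α ⊕ β} (h : (completeBipartiteGraph α β).Adj (.inr b) x) :
    ∃ a, x = .inl a := by
  rcases x with a | y
  · exact ⟨a, rfl⟩
  · simp at h

private lemma length_one_of_getVert_one' {V : Type*} {u v : V} {G : SimpleGraph V} {r : G.Walk u v}
    (hr : r.IsPath) (hne : u ≠ v) (h1 : r.getVert 1 = v) : r.length = 1 := by
  cases r with
  | nil => exact absurd rfl hne
  | cons h q =>
    rw [Walk.getVert_cons_succ, Walk.getVert_zero] at h1
    subst h1
    rw [Walk.cons_isPath_iff] at hr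
    rw [Walk.isPath_iff_eq_nil.1 hr.1]
    rfl

private lemma eq_cons_nil_of_length_one' {V : Type*} {u v : V} {G : SimpleGraph V} {r : G.Walk u v}
    (h : r.length = 1) : ∃ ha : G.Adj u v, r = Walk.cons ha Walk.nil := by
  cases r with
  | nil => simp at h
  | cons ha q =>
    cases q with
    | nil => exact ⟨ha, rfl⟩
    | cons hb q' => simp [Walk.length_cons] at h

private lemma ub_ll {a a' : α} (ha : a ≠ a') {c : ℕ}
    (h : InternallyDisjointPaths (completeBipartiteGraph α β) (.inl a) (.inl a') c) :
    c ≤ Fintype.card β := by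
  obtain ⟨p, hinj, hpath, hdisj⟩ := h
  have hne : (Sum.inl a : α ⊕ β) ≠ Sum.inl a' := by simpa using ha
  have hadj : ∀ i, (completeBipartiteGraph α β).Adj (.inl a) ((p i).getVert 1) :=
    fun i => Walk.adj_snd (Walk.not_nil_of_ne hne)
  have hmem : ∀ i, (p i).getVert 1 ∈ (p i).support := fun i =>
    Walk.mem_support_iff_exists_getVert.2 ⟨1, rfl, by
      have := Walk.not_nil_iff_lt_length.1 (Walk.not_nil_of_ne hne (p := p i))
      omega⟩
  have hex : ∀ i, ∃ b, (p i).getVert 1 = Sum.inr b := fun i => snd_inr (hadj i)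
  choose f hf using hex
  have hfinj : Function.Injective f := by
    intro i j hij
    by_contra hne2
    have h1 : (Sum.inr (f i) : α ⊕ β) ∈ (p i).support := hf i ▸ hmem i
    have h2 : (Sum.inr (f i) : α ⊕ β) ∈ (p j).support := by
      rw [hij]; exact hf j ▸ hmem j
    rcases hdisj i j hne2 _ h1 h2 with h3 | h3 <;> simp at h3
  simpa using Fintype.card_le_of_injective f hfinj

private lemma ub_rr {b b' : β} (hb : b ≠ b') {c : ℕ}
    (h : InternallyDisjointPaths (completeBipartiteGraph α β) (.inr b) (.inr b') c) :
    c ≤ Fintype.card α := by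
  obtain ⟨p, hinj, hpath, hdisj⟩ := h
  have hne : (Sum.inr b : α ⊕ β) ≠ Sum.inr b' := by simpa using hb
  have hadj : ∀ i, (completeBipartiteGraph α β).Adj (.inr b) ((p i).getVert 1) :=
    fun i => Walk.adj_snd (Walk.not_nil_of_ne hne)
  have hmem : ∀ i, (p i).getVert 1 ∈ (p i).support := fun i =>
    Walk.mem_support_iff_exists_getVert.2 ⟨1, rfl, by
      have := Walk.not_nil_iff_lt_length.1 (Walk.not_nil_of_ne hne (p := p i))
      omega⟩
  have hex : ∀ i, ∃ a, (p i).getVert 1 = Sum.inl a := fun i => snd_inl (hadj i)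
  choose f hf using hex
  have hfinj : Function.Injective f := by
    intro i j hij
    by_contra hne2
    have h1 : (Sum.inl (f i) : α ⊕ β) ∈ (p i).support := hf i ▸ hmem i
    have h2 : (Sum.inl (f i) : α ⊕ β) ∈ (p j).support := by
      rw [hij]; exact hf j ▸ hmem j
    rcases hdisj i j hne2 _ h1 h2 with h3 | h3 <;> simp at h3
  simpa using Fintype.card_le_of_injective f hfinj

private lemma ub_lr {a : α} {b : β} {c : ℕ}
    (h : InternallyDisjointPaths (completeBipartiteGraph α β) (.inl a) (.inr b) c) :
    c ≤ Fintype.card α := by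
  obtain ⟨p, hinj, hpath, hdisj⟩ := h
  have hne : (Sum.inr b : α ⊕ β) ≠ Sum.inl a := by simp
  have hadj : ∀ i, (completeBipartiteGraph α β).Adj (.inr b) ((p i).reverse.getVert 1) :=
    fun i => Walk.adj_snd (Walk.not_nil_of_ne hne)
  have hmem : ∀ i, (p i).reverse.getVert 1 ∈ (p i).support := fun i => by
    have h1 : (p i).reverse.getVert 1 ∈ (p i).reverse.support :=
      Walk.mem_support_iff_exists_getVert.2 ⟨1, rfl, by
        have := Walk.not_nil_iff_lt_length.1 (Walk.not_nil_of_ne hne (p := (p i).reverse))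
        omega⟩
    rwa [Walk.support_reverse, List.mem_reverse] at h1
  have hex : ∀ i, ∃ x, (p i).reverse.getVert 1 = Sum.inl x := fun i => snd_inl (hadj i)
  choose f hf using hex
  have hfinj : Function.Injective f := by
    intro i j hij
    by_contra hne2
    have h1 : (Sum.inl (f i) : α ⊕ β) ∈ (p i).support := hf i ▸ hmem i
    have h2 : (Sum.inl (f i) : α ⊕ β) ∈ (p j).support := by
      rw [hij]; exact hf j ▸ hmem j
    rcases hdisj i j hne2 _ h1 h2 with h3 | h3
    swap
    · simp at h3
    have hl : ∀ m : Fin c, (p m).reverse.getVert 1 = Sum.inl a → (p m).length = 1 := by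
      intro m hm
      have := length_one_of_getVert_one' (hpath m).reverse hne hm
      simpa using this
    have hi1 := hl i (by rw [hf i, h3])
    have hj1 := hl j (by rw [hf j, ← hij]; exact h3)
    obtain ⟨hai, hpi⟩ := eq_cons_nil_of_length_one' hi1
    obtain ⟨haj, hpj⟩ := eq_cons_nil_of_length_one' hj1
    exact hne2 (hinj (hpi.trans hpj.symm))
  simpa using Fintype.card_le_of_injective f hfinj

private def path2 (a a' : α) (y : β) : (completeBipartiteGraph α β).Walk (.inl a) (.inl a') :=
  Walk.cons (by simp) (Walk.cons (by simp) Walk.nil :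
    (completeBipartiteGraph α β).Walk (.inr y) (.inl a'))

@[simp] private lemma path2_support (a a' : α) (y : β) :
    (path2 a a' y).support = [Sum.inl a, Sum.inr y, Sum.inl a'] := by
  simp [path2]

private lemma lb_ll {a a' : α} (ha : a ≠ a') :
    InternallyDisjointPaths (completeBipartiteGraph α β) (.inl a) (.inl a')
      (Fintype.card β) := by
  set e := (Fintype.equivFin β).symm with he
  refine ⟨fun i => path2 a a' (e i), ?_, ?_, ?_⟩
  · intro i j hij
    have := congrArg Walk.support hij
    simp only [path2_support, List.cons.injEq] at this
    exact e.injective (Sum.inr.inj this.2.1)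
  · intro i
    rw [Walk.isPath_def]
    simp [ha]
  · intro i j hij w hwi hwj
    simp only [path2_support, List.mem_cons, List.not_mem_nil, or_false] at hwi hwj
    rcases hwi with h | h | h
    · exact Or.inl h
    · rcases hwj with h' | h' | h'
      · exact Or.inl h'
      · exact absurd (e.injective (Sum.inr.inj (h.symm.trans h'))) hij
      · exact Or.inr h'
    · exact Or.inr h

private def path2' (b b' : β) (x : α) : (completeBipartiteGraph α β).Walk (.inr b) (.inr b') :=
  Walk.cons (by simp) (Walk.cons (by simp) Walk.nil :
    (completeBipartiteGraph α β).Walk (.inl x) (.inr b'))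

@[simp] private lemma path2'_support (b b' : β) (x : α) :
    (path2' b b' x).support = [Sum.inr b, Sum.inl x, Sum.inr b'] := by
  simp [path2']

private lemma lb_rr {b b' : β} (hb : b ≠ b') :
    InternallyDisjointPaths (completeBipartiteGraph α β) (.inr b) (.inr b')
      (Fintype.card α) := by
  set e := (Fintype.equivFin α).symm with he
  refine ⟨fun i => path2' b b' (e i), ?_, ?_, ?_⟩
  · intro i j hij
    have := congrArg Walk.support hij
    simp only [path2'_support, List.cons.injEq] at this
    exact e.injective (Sum.inl.inj this.2.1)
  · intro i
    rw [Walk.isPath_def]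
    simp [hb]
  · intro i j hij w hwi hwj
    simp only [path2'_support, List.mem_cons, List.not_mem_nil, or_false] at hwi hwj
    rcases hwi with h | h | h
    · exact Or.inl h
    · rcases hwj with h' | h' | h'
      · exact Or.inl h'
      · exact absurd (e.injective (Sum.inl.inj (h.symm.trans h'))) hij
      · exact Or.inr h'
    · exact Or.inr h

private def path3 {k m : ℕ} (a i : Fin k) (y b : Fin m) :
    (completeBipartiteGraph (Fin k) (Fin m)).Walk (.inl a) (.inr b) :=
  Walk.cons (by simp) (Walk.cons (by simp)
    (Walk.cons (by simp) Walk.nil :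
      (completeBipartiteGraph (Fin k) (Fin m)).Walk (.inl i) (.inr b))
    : (completeBipartiteGraph (Fin k) (Fin m)).Walk (.inr y) (.inr b))

@[simp] private lemma path3_support {k m : ℕ} (a i : Fin k) (y b : Fin m) :
    (path3 a i y b).support = [Sum.inl a, Sum.inr y, Sum.inl i, Sum.inr b] := by
  simp [path3]

private def path1 {k m : ℕ} (a : Fin k) (b : Fin m) :
    (completeBipartiteGraph (Fin k) (Fin m)).Walk (.inl a) (.inr b) :=
  Walk.cons (by simp) Walk.nil

@[simp] private lemma path1_support {k m : ℕ} (a : Fin k) (b : Fin m) :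
    (path1 a b).support = [Sum.inl a, Sum.inr b] := by simp [path1]

private lemma lb_lr {k m : ℕ} (hkm : k ≤ m) (a : Fin k) (b : Fin m) :
    InternallyDisjointPaths (completeBipartiteGraph (Fin k) (Fin m)) (.inl a) (.inr b) k := by
  classical
  set g : Fin k → Fin m := fun i => if Fin.castLE hkm i = b then Fin.castLE hkm a
    else Fin.castLE hkm i with hg
  have hgb : ∀ i, i ≠ a → g i ≠ b := by
    intro i hia
    by_cases h : Fin.castLE hkm i = b
    · simp only [hg, if_pos h]
      intro hab
      exact hia (Fin.castLE_injective hkm (h.trans hab.symm ▸ hab.trans h.symm))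
    · simp [hg, h]
  have hginj : ∀ i j, i ≠ a → j ≠ a → g i = g j → i = j := by
    intro i j hia hja hgij
    by_cases hi : Fin.castLE hkm i = b <;> by_cases hj : Fin.castLE hkm j = b
    · exact Fin.castLE_injective hkm (hi.trans hj.symm)
    · simp only [hg, if_pos hi, if_neg hj] at hgij
      exact absurd (Fin.castLE_injective hkm hgij).symm hja
    · simp only [hg, if_neg hi, if_pos hj] at hgij
      exact absurd (Fin.castLE_injective hkm hgij) hia
    · simp only [hg, if_neg hi, if_neg hj] at hgij
      exact Fin.castLE_injective hkm hgij
  refine ⟨fun i => if h : i = a then path1 a b else path3 a i (g i) b, ?_, ?_, ?_⟩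
  · intro i j hij
    dsimp only at hij
    by_cases hi : i = a <;> by_cases hj : j = a
    · rw [hi, hj]
    · rw [dif_pos hi, dif_neg hj] at hij
      have := congrArg Walk.length hij
      simp [path1, path3] at this
    · rw [dif_neg hi, dif_pos hj] at hij
      have := congrArg Walk.length hij
      simp [path1, path3] at this
    · rw [dif_neg hi, dif_neg hj] at hij
      have := congrArg Walk.support hij
      simp only [path3_support, List.cons.injEq] at this
      exact Sum.inl.inj this.2.2.1
  · intro i
    dsimp only
    by_cases hi : i = a
    · rw [dif_pos hi, Walk.isPath_def]
      simp
    · rw [dif_neg hi, Walk.isPath_def]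
      simp [hi, Ne.symm hi, hgb i hi, Ne.symm (hgb i hi)]
  · intro i j hij w hwi hwj
    dsimp only at hwi hwj
    by_cases hi : i = a <;> by_cases hj : j = a
    · exact absurd (hi.trans hj.symm) hij
    all_goals first
    | (rw [dif_pos hi] at hwi; rw [dif_neg hj] at hwj)
    | (rw [dif_neg hi] at hwi; rw [dif_pos hj] at hwj)
    | (rw [dif_neg hi] at hwi; rw [dif_neg hj] at hwj)
    · simp only [path1_support, List.mem_cons, List.not_mem_nil, or_false] at hwi
      rcases hwi with h | h
      · exact Or.inl h
      · exact Or.inr h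
    · simp only [path1_support, List.mem_cons, List.not_mem_nil, or_false] at hwj
      rcases hwj with h | h
      · exact Or.inl h
      · exact Or.inr h
    · simp only [path3_support, List.mem_cons, List.not_mem_nil, or_false] at hwi hwj
      rcases hwi with h | h | h | h
      · exact Or.inl h
      · rcases hwj with h' | h' | h' | h'
        · exact Or.inl h'
        · exact absurd (hginj i j hi hj (Sum.inr.inj (h.symm.trans h'))) hij
        · exact absurd (h.symm.trans h') (by simp)
        · exact Or.inr h'
      · rcases hwj with h' | h' | h' | h'
        · exact Or.inl h'
        · exact absurd (h.symm.trans h') (by simp)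
        · exact absurd (Sum.inl.inj (h.symm.trans h')) hij
        · exact Or.inr h'
      · exact Or.inr h

private lemma IDP_symm {G : SimpleGraph V} {u v : V} {c : ℕ}
    (h : InternallyDisjointPaths G u v c) : InternallyDisjointPaths G v u c := by
  obtain ⟨p, hinj, hpath, hdisj⟩ := h
  refine ⟨fun i => (p i).reverse, ?_, fun i => (hpath i).reverse, ?_⟩
  · intro i j hij
    apply hinj
    have := congrArg Walk.reverse hij
    simpa [Walk.reverse_reverse] using this
  · intro i j hij w hwi hwj
    rw [Walk.support_reverse, List.mem_reverse] at hwi hwj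
    exact (hdisj i j hij w hwi hwj).symm

-- the localConn values for `K_{k,m}` with `1 ≤ k ≤ m`
private lemma localConn_ll {k m : ℕ} {a a' : Fin k} (ha : a ≠ a') :
    localConn (completeBipartiteGraph (Fin k) (Fin m)) (.inl a) (.inl a') = m := by
  have := localConn_eq (G := completeBipartiteGraph (Fin k) (Fin m))
    (u := Sum.inl a) (v := Sum.inl a') (by simpa using ha) (Fintype.card (Fin m))
    (lb_ll ha) (fun j hj => ub_ll ha hj)
  simpa using this

private lemma localConn_rr {k m : ℕ} {b b' : Fin m} (hb : b ≠ b') :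
    localConn (completeBipartiteGraph (Fin k) (Fin m)) (.inr b) (.inr b') = k := by
  have := localConn_eq (G := completeBipartiteGraph (Fin k) (Fin m))
    (u := Sum.inr b) (v := Sum.inr b') (by simpa using hb) (Fintype.card (Fin k))
    (lb_rr hb) (fun j hj => ub_rr hb hj)
  simpa using this

private lemma localConn_lr {k m : ℕ} (hkm : k ≤ m) (a : Fin k) (b : Fin m) :
    localConn (completeBipartiteGraph (Fin k) (Fin m)) (.inl a) (.inr b) = k := by
  have := localConn_eq (G := completeBipartiteGraph (Fin k) (Fin m))
    (u := Sum.inl a) (v := Sum.inr b) (by simp) k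
    (lb_lr hkm a b) (fun j hj => by simpa using ub_lr hj)
  simpa using this

private lemma localConn_rl {k m : ℕ} (hkm : k ≤ m) (a : Fin k) (b : Fin m) :
    localConn (completeBipartiteGraph (Fin k) (Fin m)) (.inr b) (.inl a) = k := by
  have hmem : InternallyDisjointPaths (completeBipartiteGraph (Fin k) (Fin m))
      (.inr b) (.inl a) k := IDP_symm (lb_lr hkm a b)
  have := localConn_eq (G := completeBipartiteGraph (Fin k) (Fin m))
    (u := Sum.inr b) (v := Sum.inl a) (by simp) k
    hmem (fun j hj => by simpa using ub_lr (IDP_symm hj))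
  simpa using this

private lemma localConn_self {G : SimpleGraph V} (v : V) : localConn G v v = 0 := by
  simp [localConn]

end Aux


section Arith

private lemma arith_tr_nonneg {K R : ℝ} (hK1 : 1 ≤ K) (hKR : K ≤ R) :
    0 ≤ R * (K - 1) + K * (R - 1) := by
  nlinarith [mul_nonneg (sub_nonneg.2 hK1) (sub_nonneg.2 hKR)]

private lemma arith_D_nonneg {K R : ℝ} (hK1 : 1 ≤ K) (hKR : K ≤ R) :
    0 ≤ (R * (K - 1) + K * (R - 1)) ^ 2
      - 4 * ((K - 1) * R * K * (R - 1) - K ^ 3 * R) := by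
  have hid : (R * (K - 1) + K * (R - 1)) ^ 2
      - 4 * ((K - 1) * R * K * (R - 1) - K ^ 3 * R)
      = (K + R) ^ 2 + 4 * K * (K ^ 2 - 1) * R := by ring
  rw [hid]
  have h1 : 0 ≤ 4 * K * (K ^ 2 - 1) * R := by
    have h2 : (0:ℝ) ≤ K ^ 2 - 1 := by nlinarith
    have hKnn : (0:ℝ) ≤ K := by linarith
    have hRnn : (0:ℝ) ≤ R := by linarith
    positivity
  nlinarith [sq_nonneg (K + R)]

private lemma arith_R_le_lam {K R : ℝ} (hK1 : 1 ≤ K) (hKR : K ≤ R) :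
    R ≤ (R * (K - 1) + K * (R - 1) +
      Real.sqrt ((R * (K - 1) + K * (R - 1)) ^ 2
        - 4 * ((K - 1) * R * K * (R - 1) - K ^ 3 * R))) / 2 := by
  set tr : ℝ := R * (K - 1) + K * (R - 1) with htr
  set dt : ℝ := (K - 1) * R * K * (R - 1) - K ^ 3 * R with hdt
  have hsqnn : 0 ≤ Real.sqrt (tr ^ 2 - 4 * dt) := Real.sqrt_nonneg _
  rcases le_or_gt (2 * R - tr) 0 with h | h
  · linarith
  · have hfac : R ^ 2 - tr * R + dt = R * (K - 1) * (R * (K - 2) - K * (K + 2)) := by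
      rw [htr, hdt]; ring
    have ha : 0 ≤ R * (K - 1) := mul_nonneg (by linarith) (by linarith)
    have hb : R * (K - 2) - K * (K + 2) ≤ 0 := by
      rcases le_or_gt K 2 with hK2 | hK2
      · nlinarith
      · rw [htr] at h
        nlinarith [h, mul_nonneg (by linarith : (0:ℝ) ≤ R) (by linarith : (0:ℝ) ≤ K - 2)]
    have hchiR : R ^ 2 - tr * R + dt ≤ 0 := by
      rw [hfac]; nlinarith [ha, hb]
    have h2 : (2 * R - tr) ^ 2 ≤ tr ^ 2 - 4 * dt := by nlinarith [hchiR]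
    have h3 : 2 * R - tr ≤ Real.sqrt (tr ^ 2 - 4 * dt) := by
      have h4 := Real.sqrt_le_sqrt h2
      rwa [Real.sqrt_sq_eq_abs, abs_of_pos h] at h4
    linarith

private lemma arith_nu_root_bound {K R ν : ℝ} (hK1 : 1 ≤ K) (hKR : K ≤ R)
    (hchi : ν ^ 2 - (R * (K - 1) + K * (R - 1)) * ν
      + ((K - 1) * R * K * (R - 1) - K ^ 3 * R) = 0) :
    |ν| ≤ (R * (K - 1) + K * (R - 1) +
      Real.sqrt ((R * (K - 1) + K * (R - 1)) ^ 2
        - 4 * ((K - 1) * R * K * (R - 1) - K ^ 3 * R))) / 2 := by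
  set tr : ℝ := R * (K - 1) + K * (R - 1) with htr
  set dt : ℝ := (K - 1) * R * K * (R - 1) - K ^ 3 * R with hdt
  have htr0 : 0 ≤ tr := arith_tr_nonneg hK1 hKR
  have hsq2 : (2 * ν - tr) ^ 2 = tr ^ 2 - 4 * dt := by linear_combination 4 * hchi
  have habs2 : |2 * ν - tr| ≤ Real.sqrt (tr ^ 2 - 4 * dt) := by
    rw [← Real.sqrt_sq_eq_abs, hsq2]
  have h5 := abs_le.1 habs2
  rw [abs_le]
  constructor
  · linarith [h5.1, Real.sqrt_nonneg (tr ^ 2 - 4 * dt)]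
  · linarith [h5.2]

private lemma arith_lam_root {K R : ℝ} (hK1 : 1 ≤ K) (hKR : K ≤ R) :
    ((R * (K - 1) + K * (R - 1) +
      Real.sqrt ((R * (K - 1) + K * (R - 1)) ^ 2
        - 4 * ((K - 1) * R * K * (R - 1) - K ^ 3 * R))) / 2) ^ 2
    - (R * (K - 1) + K * (R - 1)) *
      ((R * (K - 1) + K * (R - 1) +
      Real.sqrt ((R * (K - 1) + K * (R - 1)) ^ 2
        - 4 * ((K - 1) * R * K * (R - 1) - K ^ 3 * R))) / 2)
    + ((K - 1) * R * K * (R - 1) - K ^ 3 * R) = 0 := by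
  have hD0 := arith_D_nonneg hK1 hKR
  have hsq := Real.sq_sqrt hD0
  linear_combination (1/4 : ℝ) * hsq

end Arith

set_option maxHeartbeats 1600000

/-- For `K_{k,n-k}` with `1 ≤ k ≤ n-k`, the spectral radius of the average
connectivity matrix equals
`(1/(n(n-1)))(√(n² + 4nk³ - 4nk - 4k⁴ + 4k²) + 2nk - n - 2k²)`. -/
theorem stmt12 (n k : ℕ) (hk : 1 ≤ k) (hkn : k + k ≤ n) :
    specRad (avgConnMatrix (completeBipartiteGraph (Fin k) (Fin (n - k)))) =
      (1 / ((n : ℝ) * ((n : ℝ) - 1))) *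
        (Real.sqrt ((n : ℝ) ^ 2 + 4 * n * k ^ 3 - 4 * n * k - 4 * (k : ℝ) ^ 4 + 4 * k ^ 2) +
          2 * n * k - n - 2 * (k : ℝ) ^ 2) := by
  classical
  have hkn' : k ≤ n - k := by omega
  have hkn'' : k ≤ n := by omega
  have hn2 : 2 ≤ n := by omega
  set m := n - k with hm
  set G := completeBipartiteGraph (Fin k) (Fin m) with hG
  set M := avgConnMatrix G with hMdef
  have hcard : Fintype.card (Fin k ⊕ Fin m) = n := by
    simp only [Fintype.card_sum, Fintype.card_fin]; omega
  set K : ℝ := (k : ℝ) with hK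
  set R : ℝ := (m : ℝ) with hR
  have hK1 : (1:ℝ) ≤ K := by rw [hK]; exact_mod_cast hk
  have hKR : K ≤ R := by rw [hK, hR]; exact_mod_cast hkn'
  have hR1 : (1:ℝ) ≤ R := le_trans hK1 hKR
  have hRn : R = (n:ℝ) - K := by
    rw [hR, hK, hm]
    have : ((n - k : ℕ) : ℝ) = (n : ℝ) - (k : ℝ) := by
      push_cast [hkn'']; ring
    exact this
  set C : ℝ := ((n.choose 2 : ℕ) : ℝ) with hCdef
  have hC : C = (n:ℝ) * ((n:ℝ)-1) / 2 := by rw [hCdef]; exact Nat.cast_choose_two ℝ n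
  have hn2' : (2:ℝ) ≤ (n:ℝ) := by exact_mod_cast hn2
  have hCpos : 0 < C := by rw [hC]; nlinarith
  have hC0 : C ≠ 0 := ne_of_gt hCpos
  -- matrix entries
  have hMll : ∀ a a' : Fin k, M (Sum.inl a) (Sum.inl a') = (if a = a' then 0 else R) / C := by
    intro a a'
    by_cases h : a = a'
    · subst h
      simp [hMdef, avgConnMatrix, localConn_self, if_pos rfl]
    · have hl := localConn_ll (k := k) (m := m) (a := a) (a' := a') h
      simp [hMdef, avgConnMatrix, hcard, hl, h, hR, hG, hCdef]
  have hMlr : ∀ (a : Fin k) (b : Fin m), M (Sum.inl a) (Sum.inr b) = K / C := by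
    intro a b
    have hl := localConn_lr hkn' a b
    simp [hMdef, avgConnMatrix, hcard, hl, hK, hG, hCdef]
  have hMrl : ∀ (a : Fin k) (b : Fin m), M (Sum.inr b) (Sum.inl a) = K / C := by
    intro a b
    have hl := localConn_rl hkn' a b
    simp [hMdef, avgConnMatrix, hcard, hl, hK, hG, hCdef]
  have hMrr : ∀ b b' : Fin m, M (Sum.inr b) (Sum.inr b') = (if b = b' then 0 else K) / C := by
    intro b b'
    by_cases h : b = b'
    · subst h
      simp [hMdef, avgConnMatrix, localConn_self, if_pos rfl]
    · have hl := localConn_rr (k := k) (m := m) (b := b) (b' := b') h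
      simp [hMdef, avgConnMatrix, hcard, hl, h, hK, hG, hCdef]
  -- summation helpers
  have hsum_ite : ∀ {ι : Type} [inst : Fintype ι] [inst2 : DecidableEq ι] (c : ℝ) (a : ι)
      (y : ι → ℝ), ∑ a', (if a = a' then 0 else c) * y a' = c * (∑ a', y a') - c * y a := by
    intro ι _ _ c a y
    have h1 : ∀ a' ∈ Finset.univ, (if a = a' then 0 else c) * y a'
        = c * y a' - (if a = a' then c * y a' else 0) := by
      intro a' _; by_cases h : a = a' <;> simp [h]
    rw [Finset.sum_congr rfl h1, Finset.sum_sub_distrib, Finset.sum_ite_eq,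
      if_pos (Finset.mem_univ a), Finset.mul_sum]
  -- mulVec formulas
  have hmul1 : ∀ (x : Fin k ⊕ Fin m → ℝ) (a : Fin k),
      M.mulVec x (Sum.inl a) =
        (R * ((∑ a', x (Sum.inl a')) - x (Sum.inl a)) + K * (∑ b', x (Sum.inr b'))) / C := by
    intro x a
    simp only [Matrix.mulVec, dotProduct, Fintype.sum_sum_type, hMll, hMlr]
    have e1 : ∑ a', (if a = a' then 0 else R)/C * x (Sum.inl a')
        = (R * (∑ a', x (Sum.inl a')) - R * x (Sum.inl a))/C := by
      rw [← hsum_ite R a (fun a' => x (Sum.inl a')), Finset.sum_div]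
      exact Finset.sum_congr rfl fun a' _ => by ring
    have e2 : ∑ b', K/C * x (Sum.inr b') = (K * ∑ b', x (Sum.inr b'))/C := by
      rw [Finset.mul_sum, Finset.sum_div]
      exact Finset.sum_congr rfl fun b' _ => by ring
    rw [e1, e2, ← add_div]
    congr 1
    ring
  have hmul2 : ∀ (x : Fin k ⊕ Fin m → ℝ) (b : Fin m),
      M.mulVec x (Sum.inr b) =
        (K * (∑ a', x (Sum.inl a')) + K * ((∑ b', x (Sum.inr b')) - x (Sum.inr b))) / C := by
    intro x b
    simp only [Matrix.mulVec, dotProduct, Fintype.sum_sum_type, hMrl, hMrr]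
    have e1 : ∑ b', (if b = b' then 0 else K)/C * x (Sum.inr b')
        = (K * (∑ b', x (Sum.inr b')) - K * x (Sum.inr b))/C := by
      rw [← hsum_ite K b (fun b' => x (Sum.inr b')), Finset.sum_div]
      exact Finset.sum_congr rfl fun b' _ => by ring
    have e2 : ∑ a', K/C * x (Sum.inl a') = (K * ∑ a', x (Sum.inl a'))/C := by
      rw [Finset.mul_sum, Finset.sum_div]
      exact Finset.sum_congr rfl fun a' _ => by ring
    rw [e1, e2, ← add_div]
    congr 1
    ring
  -- spectral quantities
  set tr : ℝ := R * (K - 1) + K * (R - 1) with htr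
  set dt : ℝ := (K - 1) * R * K * (R - 1) - K ^ 3 * R with hdt
  set D : ℝ := tr ^ 2 - 4 * dt with hDdef
  have hD0 : (0:ℝ) ≤ D := by
    rw [hDdef, htr, hdt]; exact arith_D_nonneg hK1 hKR
  have htr0 : (0:ℝ) ≤ tr := by
    rw [htr]; exact arith_tr_nonneg hK1 hKR
  set lam : ℝ := (tr + Real.sqrt D) / 2 with hlam
  have hlamR : R ≤ lam := by
    rw [hlam, hDdef, htr, hdt]; exact arith_R_le_lam hK1 hKR
  have hlam0 : (0:ℝ) ≤ lam := by linarith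
  -- upper bound for eigenvalues
  have hub : ∀ μ : ℝ, Module.End.HasEigenvalue (Matrix.toLin' M) μ → |μ| ≤ lam / C := by
    intro μ hμ
    obtain ⟨x, hx⟩ := hμ.exists_hasEigenvector
    have hxv : M.mulVec x = μ • x := by
      rw [← Matrix.toLin'_apply]
      exact hx.apply_eq_smul
    set s : ℝ := ∑ a', x (Sum.inl a') with hs
    set t : ℝ := ∑ b', x (Sum.inr b') with ht
    set ν : ℝ := C * μ with hν
    have habs : |μ| = |ν| / C := by
      rw [hν, abs_mul, abs_of_pos hCpos]
      field_simp
    have hA : ∀ a : Fin k, (ν + R) * x (Sum.inl a) = R * s + K * t := by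
      intro a
      have h1 := congrFun hxv (Sum.inl a)
      rw [hmul1] at h1
      simp only [Pi.smul_apply, smul_eq_mul] at h1
      have h2 : R * (s - x (Sum.inl a)) + K * t = C * (μ * x (Sum.inl a)) := by
        rw [← h1]; field_simp; rfl
      rw [hν]; linarith [h2]
    have hB : ∀ b : Fin m, (ν + K) * x (Sum.inr b) = K * s + K * t := by
      intro b
      have h1 := congrFun hxv (Sum.inr b)
      rw [hmul2] at h1
      simp only [Pi.smul_apply, smul_eq_mul] at h1
      have h2 : K * s + K * (t - x (Sum.inr b)) = C * (μ * x (Sum.inr b)) := by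
        rw [← h1]; field_simp; rfl
      rw [hν]; linarith [h2]
    have hbound : |ν| ≤ lam := by
      by_cases hst : s = 0 ∧ t = 0
      · obtain ⟨hs0, ht0⟩ := hst
        obtain ⟨v, hv⟩ := Function.ne_iff.1 hx.2
        rcases v with a | b
        · have h1 := hA a
          rw [hs0, ht0] at h1
          have h2 : ν + R = 0 := by
            rcases mul_eq_zero.1 (by linarith [h1] : (ν + R) * x (Sum.inl a) = 0) with h | h
            · exact h
            · exact absurd h hv
          have h3 : ν = -R := by linarith
          rw [h3, abs_neg, abs_of_nonneg (by linarith : (0:ℝ) ≤ R)]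
          exact hlamR
        · have h1 := hB b
          rw [hs0, ht0] at h1
          have h2 : ν + K = 0 := by
            rcases mul_eq_zero.1 (by linarith [h1] : (ν + K) * x (Sum.inr b) = 0) with h | h
            · exact h
            · exact absurd h hv
          have h3 : ν = -K := by linarith
          rw [h3, abs_neg, abs_of_nonneg (by linarith : (0:ℝ) ≤ K)]
          exact le_trans hKR hlamR
      · have hS : (ν + R) * s = K * (R * s + K * t) := by
          have h1 : ∑ a' : Fin k, (ν + R) * x (Sum.inl a') = ∑ a' : Fin k, (R * s + K * t) :=
            Finset.sum_congr rfl fun a' _ => hA a'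
          rw [← Finset.mul_sum, ← hs, Finset.sum_const, Finset.card_univ, Fintype.card_fin,
            nsmul_eq_mul, ← hK] at h1
          exact h1
        have hT : (ν + K) * t = R * (K * s + K * t) := by
          have h1 : ∑ b' : Fin m, (ν + K) * x (Sum.inr b') = ∑ b' : Fin m, (K * s + K * t) :=
            Finset.sum_congr rfl fun b' _ => hB b'
          rw [← Finset.mul_sum, ← ht, Finset.sum_const, Finset.card_univ, Fintype.card_fin,
            nsmul_eq_mul, ← hR] at h1
          exact h1
        have e1 : (ν + R - K * R) * s = K ^ 2 * t := by linear_combination hS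
        have e2 : (ν + K - R * K) * t = R * K * s := by linear_combination hT
        have hds : (ν ^ 2 - tr * ν + dt) * s = 0 := by
          rw [htr, hdt]
          linear_combination (ν + K - R * K) * e1 + K ^ 2 * e2
        have hdtz : (ν ^ 2 - tr * ν + dt) * t = 0 := by
          rw [htr, hdt]
          linear_combination R * K * e1 + (ν + R - K * R) * e2
        have hchi : ν ^ 2 - tr * ν + dt = 0 := by
          rcases not_and_or.1 hst with h | h
          · rcases mul_eq_zero.1 hds with h' | h'
            · exact h'
            · exact absurd h' h
          · rcases mul_eq_zero.1 hdtz with h' | h'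
            · exact h'
            · exact absurd h' h
        rw [htr, hdt] at hchi
        have := arith_nu_root_bound hK1 hKR hchi
        rw [hlam, hDdef, htr, hdt]
        exact this
    rw [habs]
    exact (div_le_div_iff_of_pos_right hCpos).2 hbound
  -- eigenvector realizing lam / C
  set y1 : ℝ := K * R with hy1
  set y2 : ℝ := lam - (K - 1) * R with hy2
  set x0 : Fin k ⊕ Fin m → ℝ := Sum.elim (fun _ => y1) (fun _ => y2) with hx0
  have hx0ne : x0 ≠ 0 := by
    intro h
    have h1 := congrFun h (Sum.inl ⟨0, by omega⟩)
    simp only [hx0, Sum.elim_inl, Pi.zero_apply] at h1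
    rw [hy1] at h1
    nlinarith [h1]
  have hsx : (∑ a' : Fin k, x0 (Sum.inl a')) = K * y1 := by
    simp only [hx0, Sum.elim_inl]
    rw [Finset.sum_const, Finset.card_univ, Fintype.card_fin, nsmul_eq_mul, ← hK]
  have htx : (∑ b' : Fin m, x0 (Sum.inr b')) = R * y2 := by
    simp only [hx0, Sum.elim_inr]
    rw [Finset.sum_const, Finset.card_univ, Fintype.card_fin, nsmul_eq_mul, ← hR]
  have hquad : lam ^ 2 - (R * (K - 1) + K * (R - 1)) * lam
      + ((K - 1) * R * K * (R - 1) - K ^ 3 * R) = 0 := by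
    rw [hlam, hDdef, htr, hdt]
    exact arith_lam_root hK1 hKR
  have hmv : M.mulVec x0 = (lam / C) • x0 := by
    funext v
    rcases v with a | b
    · rw [hmul1 x0 a, hsx, htx]
      simp only [hx0, Sum.elim_inl, Pi.smul_apply, smul_eq_mul]
      have hident : R * (K * y1 - y1) + K * (R * y2) = lam * y1 := by
        rw [hy1, hy2]; ring
      rw [hident, hlam]; ring
    · rw [hmul2 x0 b, hsx, htx]
      simp only [hx0, Sum.elim_inr, Pi.smul_apply, smul_eq_mul]
      have hident : K * (K * y1) + K * (R * y2 - y2) = lam * y2 := by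
        rw [hy1, hy2]
        linear_combination -hquad
      rw [hident, hlam]; ring
  have hev : Module.End.HasEigenvalue (Matrix.toLin' M) (lam / C) :=
    Module.End.hasEigenvalue_of_hasEigenvector
      ⟨Module.End.mem_eigenspace_iff.2 (by rw [Matrix.toLin'_apply]; exact hmv), hx0ne⟩
  -- compute the spectral radius
  have hmem : (lam / C) ∈ {r : ℝ | ∃ μ : ℝ, Module.End.HasEigenvalue (Matrix.toLin' M) μ
      ∧ r = |μ|} := ⟨lam / C, hev, (abs_of_nonneg (div_nonneg hlam0 hCpos.le)).symm⟩
  have hbdd : ∀ r ∈ {r : ℝ | ∃ μ : ℝ, Module.End.HasEigenvalue (Matrix.toLin' M) μ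
      ∧ r = |μ|}, r ≤ lam / C := by
    rintro r ⟨μ, hμ, rfl⟩
    exact hub μ hμ
  have hspec : specRad M = lam / C := by
    unfold specRad
    exact le_antisymm (csSup_le ⟨lam / C, hmem⟩ hbdd) (le_csSup ⟨lam / C, hbdd⟩ hmem)
  rw [hspec]
  -- final algebra
  have hn1 : (0:ℝ) < (n:ℝ) * ((n:ℝ) - 1) :=
    mul_pos (by linarith [hn2']) (by linarith [hn2'])
  have hDst : D = (n : ℝ) ^ 2 + 4 * n * k ^ 3 - 4 * n * k - 4 * (k : ℝ) ^ 4 + 4 * k ^ 2 := by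
    rw [hDdef, htr, hdt, hRn, hK]; ring
  have htrst : tr = 2 * (n:ℝ) * k - n - 2 * (k:ℝ) ^ 2 := by
    rw [htr, hRn, hK]; ring
  rw [hlam, hDst, htrst, hC, hK]
  field_simp
  ring

end AvgConn
end
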